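/- (Main Theorem, first part.) Assume ε ∈ EuclideanSpace ℝ (Fin n) has εᵢ ∈ {−1,1} for all i and C.mulVec ε = 0, and let σ ≥ 0 satisfy ‖C.mulVec z‖² ≥ σ²·‖z‖² for every z with ⟪z, ε⟫ = 0. For y ∈ EuclideanSpace ℝ (Fin n) let S(y) = {i : Real.sign(yᵢ) ≠ εᵢ}. Then for every k and every starting vector y₀, the expectation over all length-k index sequences satisfies ∑_{j : Fin k → Fin n} (∏_{i<k} ‖c_{j(i)}‖²/‖C‖_F²) · min(#S(y_k(j, y₀)), n − #S(y_k(j, y₀))) · ‖y_k(j, y₀)‖² ≤ n·(1 − σ²/‖C‖_F²)^k·‖y₀‖². -/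

import Mathlib

open scoped RealInnerProductSpace

/-- The `j`-th row of `C` as a vector in Euclidean space. -/
noncomputable def row {n : ℕ} (C : Matrix (Fin n) (Fin n) ℝ) (j : Fin n) :
    EuclideanSpace ℝ (Fin n) := (WithLp.equiv 2 (Fin n → ℝ)).symm (C j)

/-- Matrix-vector multiplication, landing in Euclidean space. -/
noncomputable def mulVecE {n : ℕ} (C : Matrix (Fin n) (Fin n) ℝ)
    (v : EuclideanSpace ℝ (Fin n)) : EuclideanSpace ℝ (Fin n) :=
  (WithLp.equiv 2 (Fin n → ℝ)).symm (C.mulVec ((WithLp.equiv 2 (Fin n → ℝ)) v))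

/-- Squared Frobenius norm. -/
noncomputable def frobSq {n : ℕ} (C : Matrix (Fin n) (Fin n) ℝ) : ℝ :=
  ∑ i, ∑ j, (C i j) ^ 2

section aux
variable {n : ℕ}

lemma normE_sq (y : EuclideanSpace ℝ (Fin n)) : ‖y‖ ^ 2 = ∑ i, y i ^ 2 := by
  rw [EuclideanSpace.norm_eq, Real.sq_sqrt (by positivity)]; simp [Real.norm_eq_abs, sq_abs]

lemma inner_row (C : Matrix (Fin n) (Fin n) ℝ) (j : Fin n) (y : EuclideanSpace ℝ (Fin n)) :
    ⟪y, row C j⟫ = mulVecE C y j := by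
  simp [row, mulVecE, PiLp.inner_apply, Matrix.mulVec, dotProduct, mul_comm]

lemma mulVecE_apply (C : Matrix (Fin n) (Fin n) ℝ) (v : EuclideanSpace ℝ (Fin n)) (i : Fin n) :
    mulVecE C v i = ∑ l, C i l * v l := rfl

lemma norm_row_sq (C : Matrix (Fin n) (Fin n) ℝ) (j : Fin n) :
    ‖row C j‖ ^ 2 = ∑ i, (C j i) ^ 2 := by
  rw [normE_sq]; rfl

lemma frob_eq (C : Matrix (Fin n) (Fin n) ℝ) : frobSq C = ∑ j, ‖row C j‖ ^ 2 := by
  simp [frobSq, norm_row_sq]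

lemma mulVecE_norm_sq (C : Matrix (Fin n) (Fin n) ℝ) (y : EuclideanSpace ℝ (Fin n)) :
    ‖mulVecE C y‖ ^ 2 = ∑ j, ⟪y, row C j⟫ ^ 2 := by
  rw [normE_sq]
  exact Finset.sum_congr rfl fun j _ => by rw [inner_row]

lemma sum_inner_eq (y ε : EuclideanSpace ℝ (Fin n)) : ⟪y, ε⟫ = ∑ i, y i * ε i := by
  simp [PiLp.inner_apply, mul_comm]

/-- Chebyshev-type bound on a subset. -/
lemma sq_sum_le (y ε : EuclideanSpace ℝ (Fin n)) (hε1 : ∀ i, ε i = -1 ∨ ε i = 1)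
    (t : Finset (Fin n)) :
    (∑ i ∈ t, y i * ε i) ^ 2 ≤ (t.card : ℝ) * ‖y‖ ^ 2 := by
  have h1 : (∑ i ∈ t, y i * ε i) ^ 2 ≤ (∑ i ∈ t, |y i|) ^ 2 := by
    have : |∑ i ∈ t, y i * ε i| ≤ ∑ i ∈ t, |y i| := by
      refine (Finset.abs_sum_le_sum_abs _ _).trans (Finset.sum_le_sum fun i _ => ?_)
      rcases hε1 i with h | h <;> simp [h, abs_mul]
    calc (∑ i ∈ t, y i * ε i) ^ 2 = |∑ i ∈ t, y i * ε i| ^ 2 := (sq_abs _).symm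
      _ ≤ (∑ i ∈ t, |y i|) ^ 2 := by
          apply pow_le_pow_left₀ (abs_nonneg _) this
  refine h1.trans ?_
  have h2 := sq_sum_le_card_mul_sum_sq (s := t) (f := fun i => |y i|)
  refine h2.trans ?_
  rw [normE_sq]
  have : ∑ i ∈ t, |y i| ^ 2 ≤ ∑ i, y i ^ 2 := by
    refine (Finset.sum_le_sum_of_subset_of_nonneg (Finset.subset_univ t)
      (fun i _ _ => sq_nonneg _)).trans_eq ?_
    · exact Finset.sum_congr rfl fun i _ => by rw [sq_abs]
  exact mul_le_mul_of_nonneg_left this (Nat.cast_nonneg _)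

/-- The sign lemma. -/
lemma inner_eps_sq_le (y ε : EuclideanSpace ℝ (Fin n)) (hε1 : ∀ i, ε i = -1 ∨ ε i = 1)
    (s : Finset (Fin n)) (hs : ∀ i, i ∈ s ↔ Real.sign (y i) ≠ ε i) :
    ⟪y, ε⟫ ^ 2 ≤ ((max s.card (n - s.card) : ℕ) : ℝ) * ‖y‖ ^ 2 := by
  set a := ∑ i ∈ s, y i * ε i with ha
  set b := ∑ i ∈ sᶜ, y i * ε i with hb
  have hinner : ⟪y, ε⟫ = b + a := by
    rw [sum_inner_eq, ← Finset.sum_add_sum_compl s, add_comm]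
  have ha0 : a ≤ 0 := by
    refine Finset.sum_nonpos fun i hi => ?_
    have hne := (hs i).1 hi
    rcases lt_trichotomy (y i) 0 with h | h | h
    · rcases hε1 i with h1 | h1
      · exact absurd (by rw [Real.sign_of_neg h, h1]) hne
      · nlinarith
    · simp [h]
    · rcases hε1 i with h1 | h1
      · nlinarith
      · exact absurd (by rw [Real.sign_of_pos h, h1]) hne
  have hb0 : 0 ≤ b := by
    refine Finset.sum_nonneg fun i hi => ?_
    have heq : Real.sign (y i) = ε i := not_not.mp (fun h => (Finset.mem_compl.mp hi) ((hs i).2 h))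
    rcases lt_trichotomy (y i) 0 with h | h | h
    · rw [Real.sign_of_neg h] at heq; rw [← heq]; nlinarith
    · simp [h]
    · rw [Real.sign_of_pos h] at heq; rw [← heq]; nlinarith
  have hmax : ⟪y, ε⟫ ^ 2 ≤ max (b ^ 2) (a ^ 2) := by
    rw [hinner]
    rcases le_total 0 (b + a) with h | h
    · exact le_max_of_le_left (by nlinarith)
    · exact le_max_of_le_right (by nlinarith)
  have hbb : b ^ 2 ≤ ((n - s.card : ℕ) : ℝ) * ‖y‖ ^ 2 := by
    have := sq_sum_le y ε hε1 sᶜ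
    rwa [Finset.card_compl, Fintype.card_fin] at this
  have haa : a ^ 2 ≤ ((s.card : ℕ) : ℝ) * ‖y‖ ^ 2 := sq_sum_le y ε hε1 s
  rcases max_cases (b ^ 2) (a ^ 2) with ⟨he, _⟩ | ⟨he, _⟩ <;> rw [he] at hmax
  · refine hmax.trans (hbb.trans (mul_le_mul_of_nonneg_right ?_ (sq_nonneg _)))
    exact_mod_cast Nat.cast_le.mpr (le_max_right _ _)
  · refine hmax.trans (haa.trans (mul_le_mul_of_nonneg_right ?_ (sq_nonneg _)))
    exact_mod_cast Nat.cast_le.mpr (le_max_left _ _)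

end aux


open scoped Classical in
/-- Kaczmarz update for row `j`. -/
noncomputable def kacz {n : ℕ} (C : Matrix (Fin n) (Fin n) ℝ) (j : Fin n)
    (y : EuclideanSpace ℝ (Fin n)) : EuclideanSpace ℝ (Fin n) :=
  if row C j = 0 then y
  else y - ((⟪y, row C j⟫) / ‖row C j‖ ^ 2) • row C j

/-- Kaczmarz iteration along an index sequence `j : Fin k → Fin n`,
applying `T_{j 0}` first and `T_{j (k-1)}` last. -/
noncomputable def kaczIter {n : ℕ} (C : Matrix (Fin n) (Fin n) ℝ) :
    (k : ℕ) → (Fin k → Fin n) → EuclideanSpace ℝ (Fin n) → EuclideanSpace ℝ (Fin n)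
  | 0, _, y => y
  | (k + 1), j, y => kacz C (j (Fin.last k)) (kaczIter C k (fun i => j i.castSucc) y)


section aux2
variable {n : ℕ} (C : Matrix (Fin n) (Fin n) ℝ)

lemma kacz_inner_eps (ε : EuclideanSpace ℝ (Fin n)) (hε : mulVecE C ε = 0)
    (j : Fin n) (y : EuclideanSpace ℝ (Fin n)) : ⟪kacz C j y, ε⟫ = ⟪y, ε⟫ := by
  have hre : ⟪row C j, ε⟫ = 0 := by
    rw [real_inner_comm, inner_row, hε]; rfl
  unfold kacz
  split
  · rfl
  · rw [inner_sub_left, real_inner_smul_left, hre, mul_zero, sub_zero]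

lemma kacz_norm_sq (j : Fin n) (y : EuclideanSpace ℝ (Fin n)) :
    ‖row C j‖ ^ 2 * ‖kacz C j y‖ ^ 2 = ‖row C j‖ ^ 2 * ‖y‖ ^ 2 - ⟪y, row C j⟫ ^ 2 := by
  unfold kacz
  split
  · rename_i h
    simp [h]
  · rename_i h
    have hc : ‖row C j‖ ≠ 0 := norm_ne_zero_iff.mpr h
    rw [norm_sub_sq_real, real_inner_smul_right, norm_smul, mul_pow]
    rw [Real.norm_eq_abs, sq_abs]
    field_simp
    ring

lemma frob_pos (hC : C ≠ 0) : 0 < frobSq C := by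
  have h0 : 0 ≤ frobSq C := by
    apply Finset.sum_nonneg; intro i _; apply Finset.sum_nonneg; intro l _; positivity
  rcases h0.lt_or_eq with h | h
  · exact h
  · exfalso; apply hC
    have hz : ∀ i ∈ Finset.univ, ∀ l ∈ Finset.univ, (C i l) ^ 2 = 0 := by
      intro i _ l _
      have h1 : ∑ i, ∑ l, (C i l) ^ 2 = 0 := h.symm
      have := (Finset.sum_eq_zero_iff_of_nonneg (fun i _ =>
        Finset.sum_nonneg (fun l _ => sq_nonneg (C i l)))).mp h1 i (Finset.mem_univ i)
      exact (Finset.sum_eq_zero_iff_of_nonneg (fun l _ => sq_nonneg (C i l))).mp this l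
        (Finset.mem_univ l)
    ext i l
    have := hz i (Finset.mem_univ i) l (Finset.mem_univ l)
    simpa using sq_eq_zero_iff.mp this

lemma kacz_identity (hC : C ≠ 0) (y : EuclideanSpace ℝ (Fin n)) :
    ∑ j, (‖row C j‖ ^ 2 / frobSq C) * ‖kacz C j y‖ ^ 2
      = ‖y‖ ^ 2 - ‖mulVecE C y‖ ^ 2 / frobSq C := by
  have hF := frob_pos C hC
  have : ∀ j, (‖row C j‖ ^ 2 / frobSq C) * ‖kacz C j y‖ ^ 2
      = (‖row C j‖ ^ 2 * ‖y‖ ^ 2 - ⟪y, row C j⟫ ^ 2) / frobSq C := by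
    intro j
    rw [div_mul_eq_mul_div, kacz_norm_sq]
  rw [Finset.sum_congr rfl fun j _ => this j, ← Finset.sum_div, Finset.sum_sub_distrib,
    ← Finset.sum_mul, ← frob_eq, ← mulVecE_norm_sq]
  field_simp

lemma mulVecE_norm_le (hC : C ≠ 0) (y : EuclideanSpace ℝ (Fin n)) :
    ‖mulVecE C y‖ ^ 2 ≤ frobSq C * ‖y‖ ^ 2 := by
  have hF := frob_pos C hC
  have h0 : 0 ≤ ∑ j, (‖row C j‖ ^ 2 / frobSq C) * ‖kacz C j y‖ ^ 2 := by
    apply Finset.sum_nonneg; intro j _; positivity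
  rw [kacz_identity C hC] at h0
  rw [sub_nonneg, div_le_iff₀ hF] at h0
  linarith
end aux2

section aux3
variable {n : ℕ} (C : Matrix (Fin n) (Fin n) ℝ) (ε : EuclideanSpace ℝ (Fin n))

lemma eps_norm_sq (hn : 0 < n) (hε1 : ∀ i, ε i = -1 ∨ ε i = 1) : ‖ε‖ ^ 2 = (n : ℝ) := by
  rw [normE_sq]
  have : ∀ i, (ε i) ^ 2 = 1 := fun i => by rcases hε1 i with h | h <;> rw [h] <;> ring
  simp [this]

lemma f_nonneg_and_bound (hn : 0 < n) (hε1 : ∀ i, ε i = -1 ∨ ε i = 1)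
    (hε : mulVecE C ε = 0) (σ : ℝ)
    (hσ : ∀ z : EuclideanSpace ℝ (Fin n), ⟪z, ε⟫ = 0 →
      ‖mulVecE C z‖ ^ 2 ≥ σ ^ 2 * ‖z‖ ^ 2)
    (y : EuclideanSpace ℝ (Fin n)) :
    0 ≤ ‖y‖ ^ 2 - ⟪y, ε⟫ ^ 2 / n ∧
      σ ^ 2 * (‖y‖ ^ 2 - ⟪y, ε⟫ ^ 2 / n) ≤ ‖mulVecE C y‖ ^ 2 := by
  have hn' : (n : ℝ) ≠ 0 := Nat.cast_ne_zero.mpr hn.ne'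
  set z : EuclideanSpace ℝ (Fin n) := y - (⟪y, ε⟫ / n) • ε with hzdef
  have heps : ‖ε‖ ^ 2 = (n : ℝ) := eps_norm_sq ε hn hε1
  have hz_eps : ⟪z, ε⟫ = 0 := by
    rw [hzdef, inner_sub_left, real_inner_smul_left, real_inner_self_eq_norm_sq, heps]
    field_simp
    ring
  have hz_norm : ‖z‖ ^ 2 = ‖y‖ ^ 2 - ⟪y, ε⟫ ^ 2 / n := by
    rw [hzdef, norm_sub_sq_real, real_inner_smul_right, norm_smul, mul_pow,
      Real.norm_eq_abs, sq_abs, heps, div_pow]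
    field_simp
    ring
  have hz_mul : mulVecE C z = mulVecE C y := by
    ext i
    have h1 : ∀ l, z l = y l - (⟪y, ε⟫ / n) * ε l := fun l => rfl
    rw [mulVecE_apply, mulVecE_apply]
    have : ∀ l, C i l * z l = C i l * y l - (⟪y, ε⟫ / n) * (C i l * ε l) := by
      intro l; rw [h1]; ring
    rw [Finset.sum_congr rfl fun l _ => this l, Finset.sum_sub_distrib, ← Finset.mul_sum]
    have hεi : ∑ l, C i l * ε l = 0 := by
      simpa [mulVecE_apply] using congrFun (congrArg (WithLp.equiv 2 (Fin n → ℝ)) hε) i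
    rw [hεi, mul_zero, sub_zero]
  constructor
  · rw [← hz_norm]; positivity
  · have := hσ z hz_eps
    rw [hz_mul, hz_norm] at this
    linarith

lemma step_lemma (hn : 0 < n) (hC : C ≠ 0) (hε1 : ∀ i, ε i = -1 ∨ ε i = 1)
    (hε : mulVecE C ε = 0) (σ : ℝ)
    (hσ : ∀ z : EuclideanSpace ℝ (Fin n), ⟪z, ε⟫ = 0 →
      ‖mulVecE C z‖ ^ 2 ≥ σ ^ 2 * ‖z‖ ^ 2)
    (y : EuclideanSpace ℝ (Fin n)) :
    ∑ j, (‖row C j‖ ^ 2 / frobSq C) * (‖kacz C j y‖ ^ 2 - ⟪kacz C j y, ε⟫ ^ 2 / n)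
      ≤ (1 - σ ^ 2 / frobSq C) * (‖y‖ ^ 2 - ⟪y, ε⟫ ^ 2 / n) := by
  have hF := frob_pos C hC
  have hsum1 : ∑ j, ‖row C j‖ ^ 2 / frobSq C = 1 := by
    rw [← Finset.sum_div, ← frob_eq, div_self hF.ne']
  have hexp : ∀ j, (‖row C j‖ ^ 2 / frobSq C) * (‖kacz C j y‖ ^ 2 - ⟪kacz C j y, ε⟫ ^ 2 / n)
      = (‖row C j‖ ^ 2 / frobSq C) * ‖kacz C j y‖ ^ 2
        - (‖row C j‖ ^ 2 / frobSq C) * (⟪y, ε⟫ ^ 2 / n) := by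
    intro j
    rw [kacz_inner_eps C ε hε]
    ring
  rw [Finset.sum_congr rfl fun j _ => hexp j, Finset.sum_sub_distrib, ← Finset.sum_mul,
    hsum1, one_mul, kacz_identity C hC]
  obtain ⟨hf0, hfb⟩ := f_nonneg_and_bound C ε hn hε1 hε σ hσ y
  have hdiv : σ ^ 2 * (‖y‖ ^ 2 - ⟪y, ε⟫ ^ 2 / n) / frobSq C ≤ ‖mulVecE C y‖ ^ 2 / frobSq C :=
    (div_le_div_iff_of_pos_right hF).mpr hfb
  have hgoal : (1 - σ ^ 2 / frobSq C) * (‖y‖ ^ 2 - ⟪y, ε⟫ ^ 2 / ↑n)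
      = (‖y‖ ^ 2 - ⟪y, ε⟫ ^ 2 / ↑n) - σ ^ 2 * (‖y‖ ^ 2 - ⟪y, ε⟫ ^ 2 / ↑n) / frobSq C := by
    field_simp
  rw [hgoal]
  linarith [hdiv]
end aux3

section final
variable {n : ℕ} (C : Matrix (Fin n) (Fin n) ℝ) (ε : EuclideanSpace ℝ (Fin n))

lemma sigma_le_frob (hC : C ≠ 0) (hε : mulVecE C ε = 0) (σ : ℝ)
    (hσ : ∀ z : EuclideanSpace ℝ (Fin n), ⟪z, ε⟫ = 0 →
      ‖mulVecE C z‖ ^ 2 ≥ σ ^ 2 * ‖z‖ ^ 2) :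
    σ ^ 2 ≤ frobSq C := by
  obtain ⟨j0, i0, hji⟩ : ∃ j i, C j i ≠ 0 := by
    by_contra h
    push_neg at h
    exact hC (by ext j i; simpa using h j i)
  have hrow : row C j0 ≠ 0 := by
    intro h
    exact hji (by simpa [row] using congrFun (congrArg (WithLp.equiv 2 (Fin n → ℝ)) h) i0)
  have hz : ⟪row C j0, ε⟫ = 0 := by
    rw [real_inner_comm, inner_row, hε]; rfl
  have h1 := hσ (row C j0) hz
  have h2 := mulVecE_norm_le C hC (row C j0)
  have h3 : (0:ℝ) < ‖row C j0‖ ^ 2 := by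
    have := norm_pos_iff.mpr hrow
    positivity
  nlinarith

lemma iter_lemma (hn : 0 < n) (hC : C ≠ 0) (hε1 : ∀ i, ε i = -1 ∨ ε i = 1)
    (hε : mulVecE C ε = 0) (σ : ℝ)
    (hσ : ∀ z : EuclideanSpace ℝ (Fin n), ⟪z, ε⟫ = 0 →
      ‖mulVecE C z‖ ^ 2 ≥ σ ^ 2 * ‖z‖ ^ 2)
    (hone : 0 ≤ 1 - σ ^ 2 / frobSq C)
    (y₀ : EuclideanSpace ℝ (Fin n)) :
    ∀ k : ℕ, ∑ j : Fin k → Fin n,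
        (∏ i : Fin k, ‖row C (j i)‖ ^ 2 / frobSq C) *
          (‖kaczIter C k j y₀‖ ^ 2 - ⟪kaczIter C k j y₀, ε⟫ ^ 2 / n)
      ≤ (1 - σ ^ 2 / frobSq C) ^ k * (‖y₀‖ ^ 2 - ⟪y₀, ε⟫ ^ 2 / n) := by
  have hF := frob_pos C hC
  intro k
  induction k with
  | zero =>
      simp [kaczIter]
  | succ k ih =>
      rw [← Equiv.sum_comp (Fin.snocEquiv (fun _ => Fin n))]
      rw [Fintype.sum_prod_type]
      have hterm : ∀ (l : Fin n) (j' : Fin k → Fin n),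
          (∏ i : Fin (k+1), ‖row C ((Fin.snocEquiv (fun _ => Fin n)) (l, j') i)‖ ^ 2 / frobSq C) *
            (‖kaczIter C (k+1) ((Fin.snocEquiv (fun _ => Fin n)) (l, j')) y₀‖ ^ 2 -
              ⟪kaczIter C (k+1) ((Fin.snocEquiv (fun _ => Fin n)) (l, j')) y₀, ε⟫ ^ 2 / n)
          = (∏ i : Fin k, ‖row C (j' i)‖ ^ 2 / frobSq C) *
              ((‖row C l‖ ^ 2 / frobSq C) *
              (‖kacz C l (kaczIter C k j' y₀)‖ ^ 2 -
                ⟪kacz C l (kaczIter C k j' y₀), ε⟫ ^ 2 / n)) := by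
        intro l j'
        have hsnoc : (Fin.snocEquiv (fun _ => Fin n)) (l, j') = Fin.snoc j' l := rfl
        have hcast : (fun i : Fin k => (Fin.snoc j' l : Fin (k+1) → Fin n) i.castSucc) = j' := by
          funext i; simp [Fin.snoc_castSucc]
        have hiter : kaczIter C (k+1) (Fin.snoc j' l) y₀
            = kacz C l (kaczIter C k j' y₀) := by
          show kacz C ((Fin.snoc j' l : Fin (k+1) → Fin n) (Fin.last k)) _ = _
          rw [Fin.snoc_last, hcast]
        have hprod : (∏ i : Fin (k+1), ‖row C ((Fin.snoc j' l : Fin (k+1) → Fin n) i)‖ ^ 2 / frobSq C)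
            = (∏ i : Fin k, ‖row C (j' i)‖ ^ 2 / frobSq C) * (‖row C l‖ ^ 2 / frobSq C) := by
          rw [Fin.prod_univ_castSucc]
          simp [Fin.snoc_castSucc, Fin.snoc_last]
        rw [hsnoc, hiter, hprod]
        ring
      rw [Finset.sum_congr rfl fun l _ => Finset.sum_congr rfl fun j' _ => hterm l j']
      rw [Finset.sum_comm]
      have hb : ∀ j' : Fin k → Fin n,
          ∑ l, (∏ i : Fin k, ‖row C (j' i)‖ ^ 2 / frobSq C) *
              ((‖row C l‖ ^ 2 / frobSq C) *
              (‖kacz C l (kaczIter C k j' y₀)‖ ^ 2 -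
                ⟪kacz C l (kaczIter C k j' y₀), ε⟫ ^ 2 / n))
            ≤ (∏ i : Fin k, ‖row C (j' i)‖ ^ 2 / frobSq C) *
              ((1 - σ ^ 2 / frobSq C) *
                (‖kaczIter C k j' y₀‖ ^ 2 - ⟪kaczIter C k j' y₀, ε⟫ ^ 2 / n)) := by
        intro j'
        rw [← Finset.mul_sum]
        have hp : 0 ≤ ∏ i : Fin k, ‖row C (j' i)‖ ^ 2 / frobSq C :=
          Finset.prod_nonneg fun i _ => div_nonneg (sq_nonneg _) hF.le
        exact mul_le_mul_of_nonneg_left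
          (step_lemma C ε hn hC hε1 hε σ hσ (kaczIter C k j' y₀)) hp
      refine (Finset.sum_le_sum fun j' _ => hb j').trans ?_
      have : ∑ j' : Fin k → Fin n, (∏ i : Fin k, ‖row C (j' i)‖ ^ 2 / frobSq C) *
              ((1 - σ ^ 2 / frobSq C) *
                (‖kaczIter C k j' y₀‖ ^ 2 - ⟪kaczIter C k j' y₀, ε⟫ ^ 2 / n))
          = (1 - σ ^ 2 / frobSq C) * ∑ j' : Fin k → Fin n,
              (∏ i : Fin k, ‖row C (j' i)‖ ^ 2 / frobSq C) *
                (‖kaczIter C k j' y₀‖ ^ 2 - ⟪kaczIter C k j' y₀, ε⟫ ^ 2 / n) := by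
        rw [Finset.mul_sum]
        exact Finset.sum_congr rfl fun j' _ => by ring
      rw [this]
      refine (mul_le_mul_of_nonneg_left ih hone).trans_eq ?_
      ring

end final


/-- **Main Theorem, first part.** The expected value of
`min(#S, n - #S) · ‖y_k‖²` decays geometrically along the random Kaczmarz
iteration. -/
theorem main_theorem_first_part {n : ℕ} (hn : 0 < n)
    (C : Matrix (Fin n) (Fin n) ℝ) (hC : C ≠ 0)
    (ε : EuclideanSpace ℝ (Fin n)) (hε1 : ∀ i, ε i = -1 ∨ ε i = 1)
    (hε : mulVecE C ε = 0)
    (σ : ℝ) (hσ0 : 0 ≤ σ)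
    (hσ : ∀ z : EuclideanSpace ℝ (Fin n), ⟪z, ε⟫ = 0 →
      ‖mulVecE C z‖ ^ 2 ≥ σ ^ 2 * ‖z‖ ^ 2)
    (S : EuclideanSpace ℝ (Fin n) → Finset (Fin n))
    (hS : ∀ y i, i ∈ S y ↔ Real.sign (y i) ≠ ε i)
    (k : ℕ) (y₀ : EuclideanSpace ℝ (Fin n)) :
    ∑ j : Fin k → Fin n,
        (∏ i : Fin k, ‖row C (j i)‖ ^ 2 / frobSq C) *
          (((min (S (kaczIter C k j y₀)).card (n - (S (kaczIter C k j y₀)).card) : ℕ) : ℝ) *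
            ‖kaczIter C k j y₀‖ ^ 2)
      ≤ n * (1 - σ ^ 2 / frobSq C) ^ k * ‖y₀‖ ^ 2 := by
  have hF := frob_pos C hC
  have hone : 0 ≤ 1 - σ ^ 2 / frobSq C := by
    rw [sub_nonneg, div_le_one hF]
    exact sigma_le_frob C ε hC hε σ hσ
  have hn' : (0:ℝ) < n := Nat.cast_pos.mpr hn
  -- pointwise sign bound
  have hpt : ∀ y : EuclideanSpace ℝ (Fin n),
      ((min (S y).card (n - (S y).card) : ℕ) : ℝ) * ‖y‖ ^ 2
        ≤ (n : ℝ) * (‖y‖ ^ 2 - ⟪y, ε⟫ ^ 2 / n) := by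
    intro y
    have hcard : (S y).card ≤ n := by
      simpa using Finset.card_le_univ (S y)
    have hmm : min (S y).card (n - (S y).card) = n - max (S y).card (n - (S y).card) := by
      omega
    have hmax_le : max (S y).card (n - (S y).card) ≤ n := by omega
    have hsign := inner_eps_sq_le y ε hε1 (S y) (hS y)
    have hcast : ((min (S y).card (n - (S y).card) : ℕ) : ℝ)
        = (n : ℝ) - ((max (S y).card (n - (S y).card) : ℕ) : ℝ) := by
      rw [hmm, Nat.cast_sub hmax_le]
    rw [hcast]
    have hexpand : (n : ℝ) * (‖y‖ ^ 2 - ⟪y, ε⟫ ^ 2 / n) = (n:ℝ) * ‖y‖ ^ 2 - ⟪y, ε⟫ ^ 2 := by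
      field_simp
    rw [hexpand]
    nlinarith [hsign]
  -- combine
  have hp : ∀ j : Fin k → Fin n, 0 ≤ ∏ i : Fin k, ‖row C (j i)‖ ^ 2 / frobSq C := by
    intro j; exact Finset.prod_nonneg fun i _ => div_nonneg (sq_nonneg _) hF.le
  have h1 : ∑ j : Fin k → Fin n,
        (∏ i : Fin k, ‖row C (j i)‖ ^ 2 / frobSq C) *
          (((min (S (kaczIter C k j y₀)).card (n - (S (kaczIter C k j y₀)).card) : ℕ) : ℝ) *
            ‖kaczIter C k j y₀‖ ^ 2)
      ≤ ∑ j : Fin k → Fin n,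
        (∏ i : Fin k, ‖row C (j i)‖ ^ 2 / frobSq C) *
          ((n : ℝ) * (‖kaczIter C k j y₀‖ ^ 2 - ⟪kaczIter C k j y₀, ε⟫ ^ 2 / n)) := by
    apply Finset.sum_le_sum
    intro j _
    exact mul_le_mul_of_nonneg_left (hpt (kaczIter C k j y₀)) (hp j)
  refine h1.trans ?_
  have h2 : ∑ j : Fin k → Fin n,
        (∏ i : Fin k, ‖row C (j i)‖ ^ 2 / frobSq C) *
          ((n : ℝ) * (‖kaczIter C k j y₀‖ ^ 2 - ⟪kaczIter C k j y₀, ε⟫ ^ 2 / n))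
      = (n : ℝ) * ∑ j : Fin k → Fin n,
        (∏ i : Fin k, ‖row C (j i)‖ ^ 2 / frobSq C) *
          (‖kaczIter C k j y₀‖ ^ 2 - ⟪kaczIter C k j y₀, ε⟫ ^ 2 / n) := by
    rw [Finset.mul_sum]
    exact Finset.sum_congr rfl fun j _ => by ring
  rw [h2]
  have h3 := iter_lemma C ε hn hC hε1 hε σ hσ hone y₀ k
  have h4 : (n : ℝ) * ((1 - σ ^ 2 / frobSq C) ^ k * (‖y₀‖ ^ 2 - ⟪y₀, ε⟫ ^ 2 / n))
      ≤ n * (1 - σ ^ 2 / frobSq C) ^ k * ‖y₀‖ ^ 2 := by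
    rw [mul_assoc]
    apply mul_le_mul_of_nonneg_left _ hn'.le
    apply mul_le_mul_of_nonneg_left _ (pow_nonneg hone k)
    linarith [div_nonneg (sq_nonneg (⟪y₀, ε⟫ : ℝ)) hn'.le]
  exact (mul_le_mul_of_nonneg_left h3 hn'.le).trans h4
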